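/- Let F ⊆ V_CC be a g-dimensional a_CC-isotropic subspace with h positive definite on F (a point of the Siegel space H(V)), and let I ⊆ V be a nonzero rational isotropic subspace. Then the projection F → V_CC/I_CC is injective, the projection F → V_CC/I^⊥_CC is surjective, and the kernel F ∩ I^⊥_CC of the latter projects isomorphically onto a subspace of (I^⊥/I)_CC that is isotropic and h-positive, i.e., defines a point of H(V_I). -/

import Mathlib

open Module

/-- Let `F ⊆ V_ℂ` be a point of the Siegel space `H(V)` (a `g`-dimensional `a_ℂ`-isotropic
subspace on which `h` is positive definite) and `I ⊆ V` a nonzero (rational) isotropic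
subspace, with complexification `I_ℂ ⊆ V_ℂ` (a conjugation-stable subspace). Then the
projection `F → V_ℂ/I_ℂ` is injective (`F ∩ I_ℂ = 0`), the projection `F → V_ℂ/I^⊥_ℂ` is
surjective (`F + I^⊥_ℂ = V_ℂ`), and its kernel `F ∩ I^⊥_ℂ` projects isomorphically onto a
subspace of `(I^⊥/I)_ℂ` of half the dimension of `I^⊥/I` on which the induced form is
isotropic and `h` is positive, i.e. a point of `H(V_I)`. -/
theorem siegel_space_boundary_projection
    (g : ℕ) (W : Type*) [AddCommGroup W] [Module ℂ W] [FiniteDimensional ℂ W]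
    (hdim : finrank ℂ W = 2 * g)
    (σ : W →ₛₗ[starRingEnd ℂ] W) (hσ : ∀ w, σ (σ w) = w)
    (aC : W →ₗ[ℂ] W →ₗ[ℂ] ℂ)
    (halt : ∀ v, aC v v = 0)
    (hnd : ∀ v, (∀ w, aC v w = 0) → v = 0)
    (hreal : ∀ v w, aC (σ v) (σ w) = star (aC v w))
    (h : W → W → ℂ) (hdef : ∀ v w, h v w = Complex.I * aC v (σ w))
    -- the point `F ∈ H(V)`
    (F : Submodule ℂ W)
    (hFdim : finrank ℂ F = g)
    (hFiso : ∀ v ∈ F, ∀ w ∈ F, aC v w = 0)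
    (hFpos : ∀ v ∈ F, v ≠ 0 → 0 < (h v v).re)
    -- the complexification `I_ℂ` of a nonzero rational isotropic subspace `I ⊆ V`
    (I : Submodule ℂ W) (hI : I ≠ ⊥)
    (hIconj : I.map σ = I)
    (hIiso : ∀ v ∈ I, ∀ w ∈ I, aC v w = 0)
    (Iperp : Submodule ℂ W)
    (hIperp : ∀ x : W, x ∈ Iperp ↔ ∀ w ∈ I, aC x w = 0) :
    -- `F → W/I_ℂ` is injective
    F ⊓ I = ⊥ ∧
    -- `F → W/I^⊥_ℂ` is surjective
    F ⊔ Iperp = ⊤ ∧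
    -- `F ∩ I^⊥_ℂ` maps injectively into `(I^⊥/I)_ℂ`
    (F ⊓ Iperp) ⊓ I = ⊥ ∧
    -- the image has half the dimension of `(I^⊥/I)_ℂ`
    finrank ℂ Iperp = 2 * finrank ℂ ↥(F ⊓ Iperp) + finrank ℂ I ∧
    -- the image is isotropic and `h`-positive, i.e. defines a point of `H(V_I)`
    (∀ v ∈ F ⊓ Iperp, ∀ w ∈ F ⊓ Iperp, aC v w = 0) ∧
    (∀ v ∈ F ⊓ Iperp, v ∉ I → 0 < (h v v).re) := by
  -- skew-symmetry of aC
  have hskew : ∀ v w : W, aC w v = -aC v w := by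
    intro v w
    have := halt (v + w)
    simp only [map_add, LinearMap.add_apply, halt] at this
    linear_combination this
  have hskew' : ∀ v w : W, aC w v = -aC v w := hskew
  have hrefl : aC.IsRefl := by
    intro v w hvw
    rw [hskew]; rw [hvw]; ring
  have hBnd : LinearMap.BilinForm.Nondegenerate aC :=
    hrefl.nondegenerate_iff_separatingLeft.mpr hnd
  -- F ⊓ I = ⊥
  have h1 : F ⊓ I = ⊥ := by
    rw [Submodule.eq_bot_iff]
    intro v hv
    by_contra hv0
    have hvF : v ∈ F := hv.1
    have hvI : v ∈ I := hv.2
    have hσv : σ v ∈ I := by rw [← hIconj]; exact Submodule.mem_map_of_mem hvI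
    have : aC v (σ v) = 0 := hIiso v hvI (σ v) hσv
    have hpos := hFpos v hvF hv0
    rw [hdef, this, mul_zero] at hpos
    simp at hpos
  -- Iperp = orthogonal of I
  have hIperpEq : Iperp = LinearMap.BilinForm.orthogonal aC I := by
    ext x
    rw [hIperp, LinearMap.BilinForm.mem_orthogonal_iff]
    constructor
    · intro hx n hn
      exact hrefl x n (hx n hn)
    · intro hx n hn
      exact hrefl n x (hx n hn)
  -- dimension of Iperp
  have hdI : finrank ℂ I ≤ finrank ℂ W := Submodule.finrank_le I
  have hdIperp : finrank ℂ Iperp = finrank ℂ W - finrank ℂ I := by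
    rw [hIperpEq]
    exact LinearMap.BilinForm.finrank_orthogonal hBnd I
  -- F is its own orthogonal (Lagrangian)
  have hForth : LinearMap.BilinForm.orthogonal aC F = F := by
    have hle : F ≤ LinearMap.BilinForm.orthogonal aC F := by
      intro v hv
      rw [LinearMap.BilinForm.mem_orthogonal_iff]
      intro n hn
      exact hFiso n hn v hv
    have hd : finrank ℂ (LinearMap.BilinForm.orthogonal aC F) = finrank ℂ F := by
      rw [LinearMap.BilinForm.finrank_orthogonal hBnd F, hFdim, hdim]
      omega
    exact (Submodule.eq_of_le_of_finrank_le hle hd.le).symm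
  -- orth Iperp = I
  have hIorth : LinearMap.BilinForm.orthogonal aC Iperp = I := by
    rw [hIperpEq]
    exact LinearMap.BilinForm.orthogonal_orthogonal hBnd hrefl I
  -- F ⊔ Iperp = ⊤
  have h2 : F ⊔ Iperp = ⊤ := by
    have hkey : LinearMap.BilinForm.orthogonal aC (F ⊔ Iperp) = ⊥ := by
      rw [Submodule.eq_bot_iff]
      intro x hx
      have hxF : x ∈ LinearMap.BilinForm.orthogonal aC F :=
        LinearMap.BilinForm.orthogonal_le le_sup_left hx
      have hxI : x ∈ LinearMap.BilinForm.orthogonal aC Iperp :=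
        LinearMap.BilinForm.orthogonal_le le_sup_right hx
      rw [hForth] at hxF
      rw [hIorth] at hxI
      have : x ∈ F ⊓ I := ⟨hxF, hxI⟩
      rwa [h1, Submodule.mem_bot] at this
    have := congrArg (LinearMap.BilinForm.orthogonal aC) hkey
    rwa [LinearMap.BilinForm.orthogonal_orthogonal hBnd hrefl,
      LinearMap.BilinForm.orthogonal_bot] at this
  refine ⟨h1, h2, ?_, ?_, ?_, ?_⟩
  · -- (F ⊓ Iperp) ⊓ I = ⊥
    rw [Submodule.eq_bot_iff]
    intro x hx
    have : x ∈ F ⊓ I := ⟨hx.1.1, hx.2⟩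
    rwa [h1, Submodule.mem_bot] at this
  · -- dimension count
    have hsum := Submodule.finrank_sup_add_finrank_inf_eq F Iperp
    rw [h2, finrank_top, hdim, hFdim] at hsum
    omega
  · -- isotropic
    intro v hv w hw
    exact hFiso v hv.1 w hw.1
  · -- positivity
    intro v hv hvI
    have hv0 : v ≠ 0 := fun h0 => hvI (h0 ▸ I.zero_mem)
    exact hFpos v hv.1 hv0
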